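/- Let U ∈ R^{k×k} be an orthogonal matrix and Σ_φ, Σ_ψ ∈ R^{k×k} symmetric positive semidefinite matrices such that Σ_φ(Σ_φ + λI)⁻¹ = U Σ_ψ(Σ_ψ + λI)⁻¹ Uᵀ for some λ > 0. Then Uᵀ(Σ_φ + λI)^{-1/2}U = (Σ_ψ + λI)^{-1/2}. -/

import Mathlib

open Matrix

/-- The positive semidefinite square root of a positive semidefinite matrix (the definition
`Matrix.PosSemidef.sqrt` of the older Mathlib, which has since been removed). -/
noncomputable def Matrix.PosSemidef.sqrt {n : Type*} [Fintype n] [DecidableEq n] {𝕜 : Type*}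
    [RCLike 𝕜] [PartialOrder 𝕜] {A : Matrix n n 𝕜} (hA : A.PosSemidef) : Matrix n n 𝕜 :=
  (hA.1.eigenvectorUnitary : Matrix n n 𝕜) * diagonal ((↑) ∘ (√·) ∘ hA.1.eigenvalues) *
    (star (hA.1.eigenvectorUnitary : Matrix n n 𝕜))

open scoped MatrixOrder in
theorem Matrix.PosSemidef.sqrt_eq_cfcSqrt {k : ℕ} {A : Matrix (Fin k) (Fin k) ℝ}
    (hA : A.PosSemidef) : hA.sqrt = CFC.sqrt A := by
  rw [CFC.sqrt_eq_real_sqrt A hA.nonneg, cfcₙ_eq_cfc, hA.1.cfc_eq]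
  rfl

open scoped MatrixOrder in
theorem Matrix.PosSemidef.posSemidef_sqrt {k : ℕ} {A : Matrix (Fin k) (Fin k) ℝ}
    (hA : A.PosSemidef) : hA.sqrt.PosSemidef := by
  rw [hA.sqrt_eq_cfcSqrt]
  exact (CFC.sqrt_nonneg A).posSemidef

open scoped MatrixOrder in
theorem Matrix.PosSemidef.sqrt_mul_self {k : ℕ} {A : Matrix (Fin k) (Fin k) ℝ}
    (hA : A.PosSemidef) : hA.sqrt * hA.sqrt = A := by
  rw [hA.sqrt_eq_cfcSqrt]
  exact CFC.sqrt_mul_sqrt_self A hA.nonneg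

open scoped MatrixOrder in
theorem Matrix.PosSemidef.eq_sqrt_of_sq_eq {k : ℕ} {B C : Matrix (Fin k) (Fin k) ℝ}
    (hC : C.PosSemidef) (hB : B.PosSemidef) (h : C ^ 2 = B) : C = hB.sqrt := by
  rw [hB.sqrt_eq_cfcSqrt]
  exact (CFC.sqrt_unique (by rw [← sq]; exact h) hC.nonneg).symm

theorem stmt9 {k : ℕ} (lam : ℝ) (hlam : 0 < lam)
    (Sφ Sψ : Matrix (Fin k) (Fin k) ℝ) (hSφ : Sφ.PosSemidef) (hSψ : Sψ.PosSemidef)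
    (U : Matrix (Fin k) (Fin k) ℝ) (hU : Uᵀ * U = 1)
    (h1 : (Sφ + lam • (1 : Matrix (Fin k) (Fin k) ℝ)).PosSemidef)
    (h2 : (Sψ + lam • (1 : Matrix (Fin k) (Fin k) ℝ)).PosSemidef)
    (heq : Sφ * (Sφ + lam • (1 : Matrix (Fin k) (Fin k) ℝ))⁻¹
         = U * (Sψ * (Sψ + lam • (1 : Matrix (Fin k) (Fin k) ℝ))⁻¹) * Uᵀ) :
    Uᵀ * (h1.sqrt)⁻¹ * U = (h2.sqrt)⁻¹ := by
  set A := Sφ + lam • (1 : Matrix (Fin k) (Fin k) ℝ) with hAdef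
  set B := Sψ + lam • (1 : Matrix (Fin k) (Fin k) ℝ) with hBdef
  have hlamPD : (lam • (1 : Matrix (Fin k) (Fin k) ℝ)).PosDef := by
    rw [smul_one_eq_diagonal]
    exact posDef_diagonal_iff.mpr fun _ => hlam
  have hApd : A.PosDef := Matrix.PosDef.posSemidef_add hSφ hlamPD
  have hBpd : B.PosDef := Matrix.PosDef.posSemidef_add hSψ hlamPD
  have hAdet : IsUnit A.det := hApd.det_pos.ne'.isUnit
  have hBdet : IsUnit B.det := hBpd.det_pos.ne'.isUnit
  have hUU : U * Uᵀ = 1 := mul_eq_one_comm.mp hU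
  have hUinv : U⁻¹ = Uᵀ := inv_eq_right_inv hUU
  have hUTinv : (Uᵀ)⁻¹ = U := inv_eq_right_inv hU
  -- rewrite heq as A⁻¹ = U * B⁻¹ * Uᵀ
  have hSφA : Sφ * A⁻¹ = 1 - lam • A⁻¹ := by
    have h : Sφ = A - lam • (1 : Matrix (Fin k) (Fin k) ℝ) := by
      rw [hAdef]; abel
    rw [h, Matrix.sub_mul, Matrix.smul_mul, Matrix.one_mul,
      Matrix.mul_nonsing_inv _ hAdet]
  have hSψB : Sψ * B⁻¹ = 1 - lam • B⁻¹ := by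
    have h : Sψ = B - lam • (1 : Matrix (Fin k) (Fin k) ℝ) := by
      rw [hBdef]; abel
    rw [h, Matrix.sub_mul, Matrix.smul_mul, Matrix.one_mul,
      Matrix.mul_nonsing_inv _ hBdet]
  have hinv : A⁻¹ = U * B⁻¹ * Uᵀ := by
    have h2' : U * (1 - lam • B⁻¹) * Uᵀ = 1 - lam • (U * B⁻¹ * Uᵀ) := by
      rw [Matrix.mul_sub, Matrix.sub_mul, Matrix.mul_one, hUU]
      simp [Matrix.mul_smul, Matrix.smul_mul, Matrix.mul_assoc]
    rw [hSφA, hSψB, h2'] at heq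
    have hlam' : lam ≠ 0 := hlam.ne'
    exact smul_right_injective _ hlam' (sub_right_injective heq)
  -- hence A = U * B * Uᵀ, so Uᵀ * A * U = B
  have hAB : A = U * B * Uᵀ := by
    have := congrArg (·⁻¹) hinv
    simpa [Matrix.mul_inv_rev, hUinv, hUTinv,
      Matrix.nonsing_inv_nonsing_inv _ hAdet, Matrix.nonsing_inv_nonsing_inv _ hBdet,
      Matrix.mul_assoc] using this
  have hBA : Uᵀ * A * U = B := by
    rw [hAB]
    calc Uᵀ * (U * B * Uᵀ) * U = (Uᵀ * U) * B * (Uᵀ * U) := by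
          simp only [Matrix.mul_assoc]
      _ = B := by rw [hU]; simp
  -- the conjugated sqrt is the sqrt of B
  have hCpsd : (Uᵀ * h1.sqrt * U).PosSemidef := by
    have := h1.posSemidef_sqrt.conjTranspose_mul_mul_same U
    simpa using this
  have hCsq : (Uᵀ * h1.sqrt * U) ^ 2 = B := by
    rw [pow_two]
    calc (Uᵀ * h1.sqrt * U) * (Uᵀ * h1.sqrt * U)
        = Uᵀ * (h1.sqrt * (U * Uᵀ) * h1.sqrt) * U := by
          simp only [Matrix.mul_assoc]
      _ = Uᵀ * A * U := by rw [hUU]; simp [h1.sqrt_mul_self]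
      _ = B := hBA
  have hCeq : Uᵀ * h1.sqrt * U = h2.sqrt := hCpsd.eq_sqrt_of_sq_eq h2 hCsq
  rw [← hCeq, Matrix.mul_inv_rev, Matrix.mul_inv_rev, hUinv, hUTinv, Matrix.mul_assoc]
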